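/- Every minimal diagnosis for an extended DPI is equal to or a proper superset of some minimal diagnosis for the original DPI (assuming O finite). -/

import Mathlib

open Set

variable {α : Type*}

/-- `C` is a conflict for the DPI `(O, B, P, N)` wrt entailment `Ent` and falsum `bot`. -/
def IsConflict (Ent : Set α → α → Prop) (bot : α) (O B P N C : Set α) : Prop :=
  C ⊆ O ∧ ∃ x ∈ N ∪ {bot}, Ent (C ∪ B ∪ P) x

/-- `C` is a minimal conflict. -/
def IsMinConflict (Ent : Set α → α → Prop) (bot : α) (O B P N C : Set α) : Prop :=
  IsConflict Ent bot O B P N C ∧ ∀ C' ⊂ C, ¬ IsConflict Ent bot O B P N C'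

/-- `D` is a diagnosis for the DPI `(O, B, P, N)`. -/
def IsDiagnosis (Ent : Set α → α → Prop) (bot : α) (O B P N D : Set α) : Prop :=
  D ⊆ O ∧ ∀ x ∈ N ∪ {bot}, ¬ Ent ((O \ D) ∪ B ∪ P) x

/-- `D` is a minimal diagnosis. -/
def IsMinDiagnosis (Ent : Set α → α → Prop) (bot : α) (O B P N D : Set α) : Prop :=
  IsDiagnosis Ent bot O B P N D ∧ ∀ D' ⊂ D, ¬ IsDiagnosis Ent bot O B P N D'

theorem min_diagnosis_extended_contains_min_diagnosis_original
    (Ent : Set α → α → Prop)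
    (hmono : ∀ (S T : Set α) (x : α), S ⊆ T → Ent S x → Ent T x)
    (bot : α) (O B P N P' N' D : Set α) (hfin : O.Finite)
    (hD : IsMinDiagnosis Ent bot O B (P ∪ P') (N ∪ N') D) :
    ∃ D', IsMinDiagnosis Ent bot O B P N D' ∧ D' ⊆ D := by
  -- D is a diagnosis for the original DPI
  have hDdiag : IsDiagnosis Ent bot O B P N D := by
    refine ⟨hD.1.1, fun x hx hent => ?_⟩
    exact hD.1.2 x (by rcases hx with h | h
                       · exact Or.inl (Or.inl h)
                       · exact Or.inr h)
      (hmono _ _ _ (by intro y hy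
                       rcases hy with (h | h) | h
                       · exact Or.inl (Or.inl h)
                       · exact Or.inl (Or.inr h)
                       · exact Or.inr (Or.inl h)) hent)
  -- the set of diagnoses contained in D
  set S : Set (Set α) := {D'' | D'' ⊆ D ∧ IsDiagnosis Ent bot O B P N D''} with hS
  have hSfin : S.Finite := ((hfin.subset hD.1.1).finite_subsets).subset fun _ h => h.1
  have hSne : S.Nonempty := ⟨D, Subset.rfl, hDdiag⟩
  obtain ⟨D', hD'S, hmin⟩ := hSfin.exists_minimalFor id S hSne
  obtain ⟨hsub, hdiagD'⟩ : D' ⊆ D ∧ IsDiagnosis Ent bot O B P N D' := hD'S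
  refine ⟨D', ⟨hdiagD', fun D'' hss hdiag => ?_⟩, hsub⟩
  have hmem : D'' ∈ S := ⟨hss.subset.trans hsub, hdiag⟩
  exact hss.ne' (le_antisymm (hmin hmem hss.subset) hss.subset)
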